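/- For any graded based matrix T over an integral domain R, the direct sum T ⊕ (−T) is hyperbolic; moreover, the direct sum of two hyperbolic graded based matrices over R is hyperbolic. -/
import Mathlib


/-!  Based skew-symmetric matrices over an abelian group `H`, after Turaev.
A based matrix is a triple `(G, s, b)` where `G` is a finite set, `s ∈ G`,
and `b : G × G → H` is skew-symmetric.  We realize the finite set `G` as a
finite set of natural numbers; the values of `b` outside `G` are irrelevant
(isomorphism, homology, fillings etc. only refer to values on `G`). -/

/-- The data of a based matrix over `H`: a finite carrier `G ⊆ ℕ`, a base
point `s` and a pairing `b`. -/
structure PreBM (H : Type*) where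
  /-- the underlying finite set -/
  G : Finset ℕ
  /-- the base point `s` -/
  s : ℕ
  /-- the pairing -/
  b : ℕ → ℕ → H

variable {H : Type*} [AddCommGroup H]

/-- `(G, s, b)` is a based matrix: `s ∈ G` and `b` is skew-symmetric on `G`
(with vanishing diagonal). -/
def IsBM (T : PreBM H) : Prop :=
  T.s ∈ T.G ∧ (∀ g ∈ T.G, ∀ h ∈ T.G, T.b g h = -T.b h g) ∧
    ∀ g ∈ T.G, T.b g g = 0

/-- Isomorphism of based matrices: a bijection of the carriers preserving the
base point and the pairing. -/
def BMIso (T T' : PreBM H) : Prop :=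
  ∃ f : ℕ → ℕ, Set.BijOn f (T.G : Set ℕ) (T'.G : Set ℕ) ∧ f T.s = T'.s ∧
    ∀ g ∈ T.G, ∀ h ∈ T.G, T'.b (f g) (f h) = T.b g h

/-- `g` is an annihilating element of `T`. -/
def Annihilating (T : PreBM H) (g : ℕ) : Prop :=
  g ∈ T.G ∧ g ≠ T.s ∧ ∀ h ∈ T.G, T.b g h = 0

/-- `g` is a core element of `T`. -/
def CoreElt (T : PreBM H) (g : ℕ) : Prop :=
  g ∈ T.G ∧ g ≠ T.s ∧ ∀ h ∈ T.G, T.b g h = T.b T.s h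

/-- `g₁, g₂` is a complementary pair of elements of `T`. -/
def ComplPair (T : PreBM H) (g₁ g₂ : ℕ) : Prop :=
  g₁ ∈ T.G ∧ g₂ ∈ T.G ∧ g₁ ≠ T.s ∧ g₂ ≠ T.s ∧ g₁ ≠ g₂ ∧
    ∀ h ∈ T.G, T.b g₁ h + T.b g₂ h = T.b T.s h

/-- A based matrix is primitive if it has no annihilating elements, no core
elements and no complementary pairs. -/
def Primitive (T : PreBM H) : Prop :=
  (∀ g, ¬Annihilating T g) ∧ (∀ g, ¬CoreElt T g) ∧ ∀ g₁ g₂, ¬ComplPair T g₁ g₂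

/-- Elementary extension `M₁`: adjoin one annihilating element. -/
def IsExt1 (T T' : PreBM H) : Prop :=
  T'.s = T.s ∧ ∃ g, g ∉ T.G ∧ T'.G = insert g T.G ∧
    (∀ x ∈ T.G, ∀ y ∈ T.G, T'.b x y = T.b x y) ∧
    ∀ h ∈ T'.G, T'.b g h = 0

/-- Elementary extension `M₂`: adjoin one core element. -/
def IsExt2 (T T' : PreBM H) : Prop :=
  T'.s = T.s ∧ ∃ g, g ∉ T.G ∧ T'.G = insert g T.G ∧
    (∀ x ∈ T.G, ∀ y ∈ T.G, T'.b x y = T.b x y) ∧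
    ∀ h ∈ T'.G, T'.b g h = T'.b T'.s h

/-- Elementary extension `M₃`: adjoin a pair of complementary elements. -/
def IsExt3 (T T' : PreBM H) : Prop :=
  T'.s = T.s ∧ ∃ g₁ g₂, g₁ ∉ T.G ∧ g₂ ∉ T.G ∧ g₁ ≠ g₂ ∧
    T'.G = insert g₁ (insert g₂ T.G) ∧
    (∀ x ∈ T.G, ∀ y ∈ T.G, T'.b x y = T.b x y) ∧
    ∀ h ∈ T'.G, T'.b g₁ h + T'.b g₂ h = T'.b T'.s h

/-- One elementary extension between based matrices. -/
def StepExt (T T' : PreBM H) : Prop :=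
  IsBM T ∧ IsBM T' ∧ (IsExt1 T T' ∨ IsExt2 T T' ∨ IsExt3 T T')

/-- Two based matrices are homologous if they are related by a finite
sequence of elementary extensions, inverse extensions and isomorphisms. -/
def Homologous : PreBM H → PreBM H → Prop :=
  Relation.EqvGen fun T T' => StepExt T T' ∨ (IsBM T ∧ IsBM T' ∧ BMIso T T')

variable {R : Type*} [CommRing R] [IsDomain R]

/-- `b(X, Y) = ∑_{g ∈ X, h ∈ Y} b(g, h)` for subsets `X, Y` of the carrier. -/
def bSet (T : PreBM R) (X Y : Finset ℕ) : R := ∑ g ∈ X, ∑ h ∈ Y, T.b g h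

/-- A simple filling of `T = (G, s, b)`: a finite family of disjoint subsets
of `G`, each of cardinality at most `2`, whose union is `G` and one of which
is `{s}`. -/
def IsSimpleFilling (T : PreBM R) (P : Finset (Finset ℕ)) : Prop :=
  ({T.s} : Finset ℕ) ∈ P ∧ (∀ X ∈ P, X.card ≤ 2) ∧
    (∀ X ∈ P, ∀ Y ∈ P, X ≠ Y → Disjoint X Y) ∧ P.biUnion id = T.G

/-- A based matrix is hyperbolic if it admits a simple filling with zero
matrix. -/
def HyperbolicBM (T : PreBM R) : Prop :=
  ∃ P : Finset (Finset ℕ), IsSimpleFilling T P ∧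
    ∀ X ∈ P, ∀ Y ∈ P, bSet T X Y = 0

/-- The data of a graded based matrix: a based matrix together with a
splitting `G − {s} = G⁺ ⊔ G⁻`. -/
structure PreGBM (R : Type*) where
  /-- the underlying finite set -/
  G : Finset ℕ
  /-- the base point -/
  s : ℕ
  /-- the pairing -/
  b : ℕ → ℕ → R
  /-- the positive part of `G − {s}` -/
  Gp : Finset ℕ
  /-- the negative part of `G − {s}` -/
  Gm : Finset ℕ

/-- The underlying based matrix of a graded based matrix. -/
def PreGBM.toBM (T : PreGBM R) : PreBM R := ⟨T.G, T.s, T.b⟩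

/-- `T` is a graded based matrix: `(G, s, b)` is a based matrix and
`G − {s} = G⁺ ⊔ G⁻`. -/
def IsGBM (T : PreGBM R) : Prop :=
  T.s ∈ T.G ∧ (∀ g ∈ T.G, ∀ h ∈ T.G, T.b g h = -T.b h g) ∧
    (∀ g ∈ T.G, T.b g g = 0) ∧
    T.Gp ∪ T.Gm = T.G.erase T.s ∧ Disjoint T.Gp T.Gm

/-- The negation `-T` of a graded based matrix: same splitting, opposite
pairing. -/
def negGBM (T : PreGBM R) : PreGBM R := ⟨T.G, T.s, fun g h => -T.b g h, T.Gp, T.Gm⟩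

/-- Isomorphism of graded based matrices. -/
def GIso (T T' : PreGBM R) : Prop :=
  ∃ f : ℕ → ℕ, Set.BijOn f (T.G : Set ℕ) (T'.G : Set ℕ) ∧ f T.s = T'.s ∧
    (∀ g ∈ T.G, ∀ h ∈ T.G, T'.b (f g) (f h) = T.b g h) ∧
    (∀ g ∈ T.Gp, f g ∈ T'.Gp) ∧ (∀ g ∈ T.Gm, f g ∈ T'.Gm)

/-- `ε_g = 1` if `g ∈ G⁺`, `ε_g = 0` if `g ∈ G⁻`. -/
def epsOf (T₁ T₂ : PreGBM R) (g : ℕ) : R := if g ∈ T₁.Gp ∪ T₂.Gp then 1 else 0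

/-- The direct sum `T₁ ⊕ T₂` of graded based matrices (with disjoint
carriers): `G^± = G₁^± ⊔ G₂^±`, `G = {s} ⊔ G⁺ ⊔ G⁻`, `b(s, g) = b_i(s_i, g)`,
`b(g, h) = b_i(g, h)` for `g, h` in the same summand, and
`b(g, h) = ε_g · b_j(s_j, h) − ε_h · b_i(s_i, g)` for `g ∈ G_i − {s_i}`,
`h ∈ G_j − {s_j}` with `i ≠ j`. -/
def gsum (T₁ T₂ : PreGBM R) : PreGBM R where
  G := insert T₁.s (T₁.Gp ∪ T₁.Gm ∪ T₂.Gp ∪ T₂.Gm)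
  s := T₁.s
  Gp := T₁.Gp ∪ T₂.Gp
  Gm := T₁.Gm ∪ T₂.Gm
  b := fun g h =>
    if g = T₁.s then
      (if h = T₁.s then 0 else if h ∈ T₁.G then T₁.b T₁.s h else T₂.b T₂.s h)
    else if h = T₁.s then
      (if g ∈ T₁.G then T₁.b g T₁.s else T₂.b g T₂.s)
    else if g ∈ T₁.G then
      (if h ∈ T₁.G then T₁.b g h
       else epsOf T₁ T₂ g * T₂.b T₂.s h - epsOf T₁ T₂ h * T₁.b T₁.s g)
    else
      (if h ∈ T₁.G then epsOf T₁ T₂ g * T₁.b T₁.s h - epsOf T₁ T₂ h * T₂.b T₂.s g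
       else T₂.b g h)

namespace GsumAux
set_option linter.unusedSectionVars false
set_option linter.unusedVariables false

variable {R : Type*} [CommRing R] [IsDomain R] {T₁ T₂ : PreGBM R}

lemma carrier_eq (h₁ : IsGBM T₁) (h₂ : IsGBM T₂) :
    (gsum T₁ T₂).G = insert T₁.s ((T₁.G.erase T₁.s) ∪ (T₂.G.erase T₂.s)) := by
  show insert T₁.s (T₁.Gp ∪ T₁.Gm ∪ T₂.Gp ∪ T₂.Gm) = _
  rw [Finset.union_assoc (T₁.Gp ∪ T₁.Gm), h₁.2.2.2.1, h₂.2.2.2.1]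

lemma b_left (h₁ : IsGBM T₁) {g h : ℕ} (hg : g ∈ T₁.G) (hh : h ∈ T₁.G) :
    (gsum T₁ T₂).b g h = T₁.b g h := by
  by_cases hgs : g = T₁.s
  · by_cases hhs : h = T₁.s
    · subst hgs; subst hhs; simp [gsum, h₁.2.2.1 _ h₁.1]
    · subst hgs; simp [gsum, hhs, hh]
  · by_cases hhs : h = T₁.s
    · subst hhs; simp [gsum, hgs, hg]
    · simp [gsum, hgs, hhs, hg, hh]

lemma b_right (h₁ : IsGBM T₁) (hd : Disjoint T₁.G T₂.G) {g h : ℕ}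
    (hg : g ∈ T₂.G) (hh : h ∈ T₂.G) :
    (gsum T₁ T₂).b g h = T₂.b g h := by
  have hg1 : g ∉ T₁.G := Finset.disjoint_right.mp hd hg
  have hh1 : h ∉ T₁.G := Finset.disjoint_right.mp hd hh
  have hgs : g ≠ T₁.s := fun e => hg1 (e ▸ h₁.1)
  have hhs : h ≠ T₁.s := fun e => hh1 (e ▸ h₁.1)
  simp [gsum, hgs, hhs, hg1, hh1]

lemma b_s_right (h₁ : IsGBM T₁) (hd : Disjoint T₁.G T₂.G) {h : ℕ} (hh : h ∈ T₂.G) :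
    (gsum T₁ T₂).b T₁.s h = T₂.b T₂.s h ∧ (gsum T₁ T₂).b h T₁.s = T₂.b h T₂.s := by
  have hh1 : h ∉ T₁.G := Finset.disjoint_right.mp hd hh
  have hhs : h ≠ T₁.s := fun e => hh1 (e ▸ h₁.1)
  constructor <;> simp [gsum, hhs, hh1]

lemma b_cross (h₁ : IsGBM T₁) (hd : Disjoint T₁.G T₂.G) {g h : ℕ}
    (hg : g ∈ T₁.G) (hgs : g ≠ T₁.s) (hh : h ∈ T₂.G) :
    (gsum T₁ T₂).b g h
      = epsOf T₁ T₂ g * T₂.b T₂.s h - epsOf T₁ T₂ h * T₁.b T₁.s g := by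
  have hh1 : h ∉ T₁.G := Finset.disjoint_right.mp hd hh
  have hhs : h ≠ T₁.s := fun e => hh1 (e ▸ h₁.1)
  simp [gsum, hgs, hhs, hg, hh1]

lemma b_cross' (h₁ : IsGBM T₁) (hd : Disjoint T₁.G T₂.G) {g h : ℕ}
    (hg : g ∈ T₂.G) (hh : h ∈ T₁.G) (hhs : h ≠ T₁.s) :
    (gsum T₁ T₂).b g h
      = epsOf T₁ T₂ g * T₁.b T₁.s h - epsOf T₁ T₂ h * T₂.b T₂.s g := by
  have hg1 : g ∉ T₁.G := Finset.disjoint_right.mp hd hg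
  have hgs : g ≠ T₁.s := fun e => hg1 (e ▸ h₁.1)
  simp [gsum, hgs, hhs, hg1, hh]

lemma mem_cases (h₁ : IsGBM T₁) (h₂ : IsGBM T₂) {g : ℕ} (hg : g ∈ (gsum T₁ T₂).G) :
    g ∈ T₁.G ∨ (g ∈ T₂.G ∧ g ≠ T₂.s) := by
  rw [carrier_eq h₁ h₂] at hg
  rcases Finset.mem_insert.mp hg with rfl | hg'
  · exact Or.inl h₁.1
  · rcases Finset.mem_union.mp hg' with h | h
    · exact Or.inl (Finset.mem_of_mem_erase h)
    · exact Or.inr ⟨Finset.mem_of_mem_erase h, Finset.ne_of_mem_erase h⟩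

lemma sub_left (h₁ : IsGBM T₁) (h₂ : IsGBM T₂) : T₁.G ⊆ (gsum T₁ T₂).G := by
  rw [carrier_eq h₁ h₂]
  intro x hx
  by_cases hxs : x = T₁.s
  · exact Finset.mem_insert.mpr (Or.inl hxs)
  · exact Finset.mem_insert.mpr (Or.inr (Finset.mem_union_left _
      (Finset.mem_erase.mpr ⟨hxs, hx⟩)))

lemma sub_right (h₁ : IsGBM T₁) (h₂ : IsGBM T₂) :
    T₂.G.erase T₂.s ⊆ (gsum T₁ T₂).G := by
  rw [carrier_eq h₁ h₂]
  intro x hx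
  exact Finset.mem_insert.mpr (Or.inr (Finset.mem_union_right _ hx))

lemma b_skew (h₁ : IsGBM T₁) (h₂ : IsGBM T₂) (hd : Disjoint T₁.G T₂.G)
    {g h : ℕ} (hg : g ∈ (gsum T₁ T₂).G) (hh : h ∈ (gsum T₁ T₂).G) :
    (gsum T₁ T₂).b g h = -(gsum T₁ T₂).b h g := by
  rcases mem_cases h₁ h₂ hg with hg1 | ⟨hg2, hg2s⟩ <;>
    rcases mem_cases h₁ h₂ hh with hh1 | ⟨hh2, hh2s⟩
  · rw [b_left h₁ hg1 hh1, b_left h₁ hh1 hg1, h₁.2.1 g hg1 h hh1]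
  · by_cases hgs : g = T₁.s
    · subst hgs
      rw [(b_s_right h₁ hd hh2).1, (b_s_right h₁ hd hh2).2, h₂.2.1 _ h₂.1 h hh2]
    · rw [b_cross h₁ hd hg1 hgs hh2, b_cross' h₁ hd hh2 hg1 hgs]
      ring
  · by_cases hhs : h = T₁.s
    · subst hhs
      rw [(b_s_right h₁ hd hg2).2, (b_s_right h₁ hd hg2).1, h₂.2.1 g hg2 _ h₂.1]
    · rw [b_cross' h₁ hd hg2 hh1 hhs, b_cross h₁ hd hh1 hhs hg2]
      ring
  · rw [b_right h₁ hd hg2 hh2, b_right h₁ hd hh2 hg2, h₂.2.1 g hg2 h hh2]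

lemma bSet_left (h₁ : IsGBM T₁) {X Y : Finset ℕ} (hX : X ⊆ T₁.G) (hY : Y ⊆ T₁.G) :
    bSet (gsum T₁ T₂).toBM X Y = bSet T₁.toBM X Y :=
  Finset.sum_congr rfl fun g hg => Finset.sum_congr rfl fun h hh =>
    b_left h₁ (hX hg) (hY hh)

lemma bSet_right (h₁ : IsGBM T₁) (hd : Disjoint T₁.G T₂.G) {X Y : Finset ℕ}
    (hX : X ⊆ T₂.G) (hY : Y ⊆ T₂.G) :
    bSet (gsum T₁ T₂).toBM X Y = bSet T₂.toBM X Y :=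
  Finset.sum_congr rfl fun g hg => Finset.sum_congr rfl fun h hh =>
    b_right h₁ hd (hX hg) (hY hh)

lemma bSet_skew (h₁ : IsGBM T₁) (h₂ : IsGBM T₂) (hd : Disjoint T₁.G T₂.G)
    {X Y : Finset ℕ} (hX : X ⊆ (gsum T₁ T₂).G) (hY : Y ⊆ (gsum T₁ T₂).G) :
    bSet (gsum T₁ T₂).toBM X Y = -bSet (gsum T₁ T₂).toBM Y X := by
  unfold bSet
  rw [Finset.sum_comm (s := Y)]
  rw [← Finset.sum_neg_distrib]
  refine Finset.sum_congr rfl fun g hg => ?_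
  rw [← Finset.sum_neg_distrib]
  exact Finset.sum_congr rfl fun h hh => b_skew h₁ h₂ hd (hX hg) (hY hh)

lemma bSet_cross (h₁ : IsGBM T₁) (hd : Disjoint T₁.G T₂.G) {X Y : Finset ℕ}
    (hX : X ⊆ T₁.G) (hY : Y ⊆ T₂.G)
    (SX : ∑ g ∈ X, T₁.b T₁.s g = 0) (SY : ∑ h ∈ Y, T₂.b T₂.s h = 0) :
    bSet (gsum T₁ T₂).toBM X Y = 0 := by
  have key : ∀ g ∈ X, ∑ h ∈ Y, (gsum T₁ T₂).b g h
      = -((∑ h ∈ Y, epsOf T₁ T₂ h) * T₁.b T₁.s g) := by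
    intro g hg
    by_cases hgs : g = T₁.s
    · subst hgs
      rw [Finset.sum_congr rfl fun h hh => (b_s_right h₁ hd (hY hh)).1, SY,
        h₁.2.2.1 _ h₁.1, mul_zero, neg_zero]
    · rw [Finset.sum_congr rfl fun h hh => b_cross h₁ hd (hX hg) hgs (hY hh),
        Finset.sum_sub_distrib, ← Finset.mul_sum, SY, mul_zero, ← Finset.sum_mul,
        zero_sub]
  show ∑ g ∈ X, ∑ h ∈ Y, (gsum T₁ T₂).b g h = 0
  rw [Finset.sum_congr rfl key, Finset.sum_neg_distrib, ← Finset.mul_sum, SX,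
    mul_zero, neg_zero]

end GsumAux

/-- For any graded based matrix `T` over an integral
domain, the direct sum `T ⊕ (−T)` (formed with a disjoint isomorphic copy of
`−T`) is hyperbolic; moreover the direct sum of two hyperbolic graded based
matrices is hyperbolic. -/
theorem gsum_hyperbolic {R : Type*} [CommRing R] [IsDomain R] :
    (∀ T T' : PreGBM R, IsGBM T → IsGBM T' → Disjoint T.G T'.G →
      GIso (negGBM T) T' → HyperbolicBM (gsum T T').toBM) ∧
    (∀ T T' : PreGBM R, IsGBM T → IsGBM T' → Disjoint T.G T'.G →
      HyperbolicBM T.toBM → HyperbolicBM T'.toBM →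
      HyperbolicBM (gsum T T').toBM) := by
  constructor
  · -- Part 1: T ⊕ (−T) is hyperbolic
    intro T T' h₁ h₂ hd hiso
    obtain ⟨f, hf, hfs, hfb, hfp, hfm⟩ := hiso
    have hfG : ∀ g ∈ T.G, f g ∈ T'.G := fun g hg => hf.1 hg
    have hfinj : Set.InjOn f T.G := hf.2.1
    have hfsur : Set.SurjOn f T.G T'.G := hf.2.2
    have hfs' : f T.s = T'.s := hfs
    have hfb' : ∀ g ∈ T.G, ∀ h ∈ T.G, T'.b (f g) (f h) = -T.b g h := hfb
    have hGpsub₁ : T.Gp ⊆ T.G := by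
      intro x hx
      have hx' : x ∈ T.Gp ∪ T.Gm := Finset.mem_union_left _ hx
      rw [h₁.2.2.2.1] at hx'
      exact Finset.mem_of_mem_erase hx'
    have hGpsub₂ : T'.Gp ⊆ T'.G := by
      intro x hx
      have hx' : x ∈ T'.Gp ∪ T'.Gm := Finset.mem_union_left _ hx
      rw [h₂.2.2.2.1] at hx'
      exact Finset.mem_of_mem_erase hx'
    have heps : ∀ g ∈ T.G.erase T.s, epsOf T T' (f g) = epsOf T T' g := by
      intro g hg
      have hgG := Finset.mem_of_mem_erase hg
      have hg' : g ∈ T.Gp ∪ T.Gm := by rw [h₁.2.2.2.1]; exact hg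
      unfold epsOf
      rcases Finset.mem_union.mp hg' with hp | hm
      · rw [if_pos (Finset.mem_union_left _ hp),
          if_pos (Finset.mem_union_right _ (hfp g hp))]
      · have e1 : g ∉ T.Gp ∪ T'.Gp := by
          intro hx
          rcases Finset.mem_union.mp hx with h' | h'
          · exact Finset.disjoint_left.mp h₁.2.2.2.2 h' hm
          · exact Finset.disjoint_left.mp hd hgG (hGpsub₂ h')
        have e2 : f g ∉ T.Gp ∪ T'.Gp := by
          intro hx
          rcases Finset.mem_union.mp hx with h' | h'
          · exact Finset.disjoint_right.mp hd (hfG _ hgG) (hGpsub₁ h')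
          · exact Finset.disjoint_left.mp h₂.2.2.2.2 h' (hfm g hm)
        rw [if_neg e2, if_neg e1]
    have pairfacts : ∀ g ∈ T.G.erase T.s,
        g ∈ T.G ∧ g ≠ T.s ∧ f g ∈ T'.G ∧ f g ≠ T'.s ∧ g ≠ f g := by
      intro g hg
      have hgG := Finset.mem_of_mem_erase hg
      have hgs := (Finset.mem_erase.mp hg).1
      have hfgG : f g ∈ T'.G := hfG _ hgG
      refine ⟨hgG, hgs, hfgG, ?_, ?_⟩
      · intro e
        exact hgs (hfinj hgG h₁.1 (e.trans hfs'.symm))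
      · intro e
        exact Finset.disjoint_left.mp hd hgG (e ▸ hfgG)
    refine ⟨insert {T.s} ((T.G.erase T.s).image fun g => ({g, f g} : Finset ℕ)),
      ⟨Finset.mem_insert_self _ _, ?_, ?_, ?_⟩, ?_⟩
    · -- cards
      intro X hX
      rcases Finset.mem_insert.mp hX with rfl | hX'
      · simp
      · simp only [Finset.mem_image] at hX'
        obtain ⟨g, hg, rfl⟩ := hX'
        exact le_trans (Finset.card_insert_le _ _) (by simp)
    · -- pairwise disjoint
      intro X hX Y hY hne
      rcases Finset.mem_insert.mp hX with rfl | hX' <;>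
        rcases Finset.mem_insert.mp hY with rfl | hY'
      · exact absurd rfl hne
      · simp only [Finset.mem_image] at hY'
        obtain ⟨g, hg, rfl⟩ := hY'
        obtain ⟨hgG, hgs, hfgG, hfgs, hgfg⟩ := pairfacts g hg
        simp only [Finset.disjoint_left, Finset.mem_singleton, Finset.mem_insert]
        rintro a rfl (h | h)
        · exact hgs h.symm
        · exact Finset.disjoint_left.mp hd h₁.1 (h ▸ hfgG)
      · simp only [Finset.mem_image] at hX'
        obtain ⟨g, hg, rfl⟩ := hX'
        obtain ⟨hgG, hgs, hfgG, hfgs, hgfg⟩ := pairfacts g hg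
        simp only [Finset.disjoint_left, Finset.mem_singleton, Finset.mem_insert]
        rintro a (rfl | rfl) h
        · exact hgs h
        · exact Finset.disjoint_left.mp hd h₁.1 (h ▸ hfgG)
      · simp only [Finset.mem_image] at hX' hY'
        obtain ⟨g, hg, rfl⟩ := hX'
        obtain ⟨g', hg', rfl⟩ := hY'
        obtain ⟨hgG, hgs, hfgG, hfgs, hgfg⟩ := pairfacts g hg
        obtain ⟨hg'G, hg's, hfg'G, hfg's, hg'fg'⟩ := pairfacts g' hg'
        have hgg' : g ≠ g' := by rintro rfl; exact hne rfl
        simp only [Finset.disjoint_left, Finset.mem_insert, Finset.mem_singleton]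
        rintro a (rfl | rfl) (h | h)
        · exact hgg' h
        · exact Finset.disjoint_left.mp hd hgG (h ▸ hfg'G)
        · exact Finset.disjoint_left.mp hd hg'G (h ▸ hfgG)
        · exact hgg' (hfinj hgG hg'G h)
    · -- biUnion
      show _ = (gsum T T').G
      rw [GsumAux.carrier_eq h₁ h₂]
      ext x
      simp only [Finset.mem_biUnion, Finset.mem_insert, Finset.mem_image, id,
        Finset.mem_union]
      constructor
      · rintro ⟨X, hX | ⟨g, hg, rfl⟩, hxX⟩
        · subst hX
          exact Or.inl (Finset.mem_singleton.mp hxX)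
        · obtain ⟨hgG, hgs, hfgG, hfgs, hgfg⟩ := pairfacts g hg
          rcases Finset.mem_insert.mp hxX with rfl | hx'
          · exact Or.inr (Or.inl hg)
          · rw [Finset.mem_singleton] at hx'
            subst hx'
            exact Or.inr (Or.inr (Finset.mem_erase.mpr ⟨hfgs, hfgG⟩))
      · rintro (rfl | hx | hx)
        · exact ⟨{T.s}, Or.inl rfl, Finset.mem_singleton_self _⟩
        · exact ⟨{x, f x}, Or.inr ⟨x, hx, rfl⟩, Finset.mem_insert_self _ _⟩
        · obtain ⟨g, hgG, rfl⟩ := hfsur (Finset.mem_erase.mp hx).2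
          have hgG : g ∈ T.G := hgG
          have hgs : g ≠ T.s := by
            rintro rfl
            exact (Finset.mem_erase.mp hx).1 hfs'
          exact ⟨{g, f g}, Or.inr ⟨g, Finset.mem_erase.mpr ⟨hgs, hgG⟩, rfl⟩,
            Finset.mem_insert.mpr (Or.inr (Finset.mem_singleton_self _))⟩
    · -- zero matrix
      intro X hX Y hY
      rcases Finset.mem_insert.mp hX with rfl | hX' <;>
        rcases Finset.mem_insert.mp hY with rfl | hY'
      · show ∑ x ∈ {T.s}, ∑ y ∈ {T.s}, (gsum T T').b x y = 0
        rw [Finset.sum_singleton, Finset.sum_singleton,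
          GsumAux.b_left h₁ h₁.1 h₁.1]
        exact h₁.2.2.1 _ h₁.1
      · simp only [Finset.mem_image] at hY'
        obtain ⟨g, hg, rfl⟩ := hY'
        obtain ⟨hgG, hgs, hfgG, hfgs, hgfg⟩ := pairfacts g hg
        show ∑ x ∈ {T.s}, ∑ y ∈ {g, f g}, (gsum T T').b x y = 0
        rw [Finset.sum_singleton, Finset.sum_pair hgfg,
          GsumAux.b_left h₁ h₁.1 hgG, (GsumAux.b_s_right h₁ hd hfgG).1,
          ← hfs', hfb' _ h₁.1 _ hgG]
        ring
      · simp only [Finset.mem_image] at hX'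
        obtain ⟨g, hg, rfl⟩ := hX'
        obtain ⟨hgG, hgs, hfgG, hfgs, hgfg⟩ := pairfacts g hg
        show ∑ x ∈ {g, f g}, ∑ y ∈ {T.s}, (gsum T T').b x y = 0
        rw [Finset.sum_pair hgfg, Finset.sum_singleton, Finset.sum_singleton,
          GsumAux.b_left h₁ hgG h₁.1, (GsumAux.b_s_right h₁ hd hfgG).2,
          ← hfs', hfb' _ hgG _ h₁.1]
        ring
      · simp only [Finset.mem_image] at hX' hY'
        obtain ⟨g, hg, rfl⟩ := hX'
        obtain ⟨g', hg', rfl⟩ := hY'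
        obtain ⟨hgG, hgs, hfgG, hfgs, hgfg⟩ := pairfacts g hg
        obtain ⟨hg'G, hg's, hfg'G, hfg's, hg'fg'⟩ := pairfacts g' hg'
        show ∑ x ∈ {g, f g}, ∑ y ∈ {g', f g'}, (gsum T T').b x y = 0
        rw [Finset.sum_pair hgfg, Finset.sum_pair hg'fg', Finset.sum_pair hg'fg',
          GsumAux.b_left h₁ hgG hg'G,
          GsumAux.b_cross h₁ hd hgG hgs hfg'G,
          GsumAux.b_cross' h₁ hd hfgG hg'G hg's,
          GsumAux.b_right h₁ hd hfgG hfg'G,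
          hfb' g hgG g' hg'G, ← hfs', hfb' T.s h₁.1 g hgG, hfb' T.s h₁.1 g' hg'G,
          heps g hg, heps g' hg']
        ring
  · -- Part 2: direct sum of hyperbolics
    intro T T' h₁ h₂ hd hH hH'
    obtain ⟨P, ⟨hsP, hcard, hdisj, hun⟩, hz⟩ := hH
    obtain ⟨P', ⟨hsP', hcard', hdisj', hun'⟩, hz'⟩ := hH'
    have hun2 : P.biUnion id = T.G := hun
    have hun2' : P'.biUnion id = T'.G := hun'
    have hsP2 : ({T.s} : Finset ℕ) ∈ P := hsP
    have hsP2' : ({T'.s} : Finset ℕ) ∈ P' := hsP'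
    have hPsub : ∀ X ∈ P, X ⊆ T.G := fun X hX => by
      rw [← hun2]; exact Finset.subset_biUnion_of_mem id hX
    have hPsub' : ∀ X ∈ P', X ⊆ T'.G := fun X hX => by
      rw [← hun2']; exact Finset.subset_biUnion_of_mem id hX
    have hEsub : ∀ X ∈ P'.erase {T'.s}, X ⊆ T'.G.erase T'.s := by
      intro X hX a ha
      have hXP' := Finset.mem_of_mem_erase hX
      have hs : T'.s ∉ X := Finset.disjoint_singleton_right.mp
        (hdisj' _ hXP' _ hsP2' (Finset.ne_of_mem_erase hX))
      exact Finset.mem_erase.mpr ⟨fun e => hs (e ▸ ha), hPsub' _ hXP' ha⟩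
    have SXf : ∀ X ∈ P, ∑ g ∈ X, T.b T.s g = 0 := by
      intro X hX
      have h := hz _ hsP2 _ hX
      simpa [bSet, PreGBM.toBM] using h
    have SYf : ∀ Y ∈ P', ∑ h ∈ Y, T'.b T'.s h = 0 := by
      intro Y hY
      have h := hz' _ hsP2' _ hY
      simpa [bSet, PreGBM.toBM] using h
    refine ⟨P ∪ P'.erase {T'.s}, ⟨Finset.mem_union_left _ hsP2, ?_, ?_, ?_⟩, ?_⟩
    · intro X hX
      rcases Finset.mem_union.mp hX with h | h
      · exact hcard X h
      · exact hcard' X (Finset.mem_of_mem_erase h)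
    · intro X hX Y hY hne
      rcases Finset.mem_union.mp hX with hXP | hXE <;>
        rcases Finset.mem_union.mp hY with hYP | hYE
      · exact hdisj X hXP Y hYP hne
      · exact Finset.disjoint_left.mpr fun a haX haY =>
          Finset.disjoint_left.mp hd (hPsub X hXP haX)
            (hPsub' Y (Finset.mem_of_mem_erase hYE) haY)
      · exact Finset.disjoint_left.mpr fun a haX haY =>
          Finset.disjoint_left.mp hd (hPsub Y hYP haY)
            (hPsub' X (Finset.mem_of_mem_erase hXE) haX)
      · exact hdisj' X (Finset.mem_of_mem_erase hXE) Y (Finset.mem_of_mem_erase hYE) hne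
    · -- biUnion
      show _ = (gsum T T').G
      rw [GsumAux.carrier_eq h₁ h₂]
      ext x
      simp only [Finset.mem_biUnion, Finset.mem_union, Finset.mem_insert, id]
      constructor
      · rintro ⟨X, hXP | hXE, hxX⟩
        · rcases eq_or_ne x T.s with rfl | hxs
          · exact Or.inl rfl
          · exact Or.inr (Or.inl (Finset.mem_erase.mpr ⟨hxs, hPsub X hXP hxX⟩))
        · exact Or.inr (Or.inr (hEsub X hXE hxX))
      · rintro (rfl | hx | hx)
        · exact ⟨{T.s}, Or.inl hsP2, Finset.mem_singleton_self _⟩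
        · have hx2 : x ∈ P.biUnion id := by
            rw [hun2]; exact Finset.mem_of_mem_erase hx
          obtain ⟨X, hX, hxX⟩ := Finset.mem_biUnion.mp hx2
          exact ⟨X, Or.inl hX, hxX⟩
        · have hx2 : x ∈ P'.biUnion id := by
            rw [hun2']; exact Finset.mem_of_mem_erase hx
          obtain ⟨X, hX, hxX⟩ := Finset.mem_biUnion.mp hx2
          refine ⟨X, Or.inr (Finset.mem_erase.mpr ⟨?_, hX⟩), hxX⟩
          rintro rfl
          exact (Finset.mem_erase.mp hx).1 (Finset.mem_singleton.mp hxX)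
    · -- zero matrix
      intro X hX Y hY
      rcases Finset.mem_union.mp hX with hXP | hXE <;>
        rcases Finset.mem_union.mp hY with hYP | hYE
      · rw [GsumAux.bSet_left h₁ (hPsub X hXP) (hPsub Y hYP)]
        exact hz X hXP Y hYP
      · exact GsumAux.bSet_cross h₁ hd (hPsub X hXP)
          (hPsub' _ (Finset.mem_of_mem_erase hYE)) (SXf X hXP)
          (SYf _ (Finset.mem_of_mem_erase hYE))
      · rw [GsumAux.bSet_skew h₁ h₂ hd
          ((hEsub X hXE).trans (GsumAux.sub_right h₁ h₂))
          ((hPsub Y hYP).trans (GsumAux.sub_left h₁ h₂)),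
          GsumAux.bSet_cross h₁ hd (hPsub Y hYP)
            (hPsub' _ (Finset.mem_of_mem_erase hXE)) (SXf Y hYP)
            (SYf _ (Finset.mem_of_mem_erase hXE)), neg_zero]
      · rw [GsumAux.bSet_right h₁ hd (hPsub' _ (Finset.mem_of_mem_erase hXE))
          (hPsub' _ (Finset.mem_of_mem_erase hYE))]
        exact hz' _ (Finset.mem_of_mem_erase hXE) _ (Finset.mem_of_mem_erase hYE)
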